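/- arXiv:1302.6659 — 2 statements merged into one kernel-verified Lean document; each statement's English description precedes it below -/
import Mathlib

section
/- Let α ∈ (0,1) and θ ∈ (0,1). Suppose u : {0,…,n} × [0,1] → [0,1] satisfies: u(n,v) = 1 whenever v ≥ α/2; u(0,v) = 0 whenever v ≤ α/2; and in all other cases (1−v) F_{u(y,v)}(y−1) + v F_{u(y,v)}(y) = α/2. Then Σ_{y=0}^{n} f_θ(y) · Leb({v ∈ [0,1] : u(y,v) < θ}) = α/2, where Leb denotes Lebesgue measure on [0,1]; that is, Stevens' randomized upper endpoint satisfies P_θ(θ > u(Y,V)) = α/2 exactly, for Y Binomial(n,θ) and V uniform on (0,1) independent of Y. -/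
open MeasureTheory

/-- The Binomial(n, θ) probability mass function `f_θ(y) = C(n,y) θ^y (1-θ)^(n-y)`. -/
noncomputable def binomP (n : ℕ) (θ : ℝ) (y : ℕ) : ℝ :=
  (n.choose y : ℝ) * θ ^ y * (1 - θ) ^ (n - y)

/-- `F_θ(y-1) = ∑_{j=0}^{y-1} f_θ(j)`, with the convention `F_θ(-1) = 0`. -/
noncomputable def binomCDFpred (n : ℕ) (θ : ℝ) (y : ℕ) : ℝ :=
  ∑ j ∈ Finset.range y, binomP n θ j

/-- The Binomial(n, θ) cumulative distribution function `F_θ(y) = ∑_{j=0}^{y} f_θ(j)`. -/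
noncomputable def binomCDF (n : ℕ) (θ : ℝ) (y : ℕ) : ℝ :=
  ∑ j ∈ Finset.range (y + 1), binomP n θ j

noncomputable def gfun (n : ℕ) (θ : ℝ) (j : ℕ) : ℝ :=
  (n : ℝ) * ((n-1).choose j : ℝ) * θ^j * (1-θ)^(n-1-j)

lemma gfun_eq_zero {n j : ℕ} (h : n ≤ j) (θ : ℝ) : gfun n θ j = 0 := by
  rcases Nat.eq_zero_or_pos n with h0 | h0
  · simp [gfun, h0]
  · have : (n-1).choose j = 0 := Nat.choose_eq_zero_of_lt (by omega)
    simp [gfun, this]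

lemma hasDerivAt_one_sub_pow (m : ℕ) (θ : ℝ) :
    HasDerivAt (fun t : ℝ => (1 - t)^m) (-((m:ℝ) * (1-θ)^(m-1))) θ := by
  have h := ((hasDerivAt_id θ).const_sub 1).pow m
  simp only [id_eq] at h
  exact h.congr_deriv (by ring)

lemma hasDerivAt_binomP_succ (n j : ℕ) (θ : ℝ) :
    HasDerivAt (fun t => binomP n t (j+1)) (gfun n θ j - gfun n θ (j+1)) θ := by
  rcases lt_or_ge n (j+1) with h | h
  · have h1 : n.choose (j+1) = 0 := Nat.choose_eq_zero_of_lt h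
    rw [gfun_eq_zero (by omega) θ, gfun_eq_zero (by omega) θ]
    simp only [binomP, h1, Nat.cast_zero, zero_mul, sub_zero]
    simpa using hasDerivAt_const θ (0:ℝ)
  · have hpow : HasDerivAt (fun t : ℝ => t^(j+1)) ((j+1 : ℝ) * θ^j) θ := by
      simpa using hasDerivAt_pow (j+1) θ
    have h2 := hasDerivAt_one_sub_pow (n - (j+1)) θ
    have hmul := (hpow.mul h2).const_mul ((n.choose (j+1) : ℝ))
    refine (hmul.congr_of_eventuallyEq (Filter.Eventually.of_forall fun t => ?_)).congr_deriv (Eq.symm ?_)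
    · simp only [binomP, Pi.mul_apply]; ring
    · have e1n : n.choose (j+1) * (j+1) = n * ((n-1).choose j) := by
        have := Nat.add_one_mul_choose_eq (n-1) j
        rw [Nat.sub_add_cancel (by omega)] at this
        simpa [Nat.succ_eq_add_one] using this.symm
      have e2n : (n-1).choose (j+1) * n = n.choose (j+1) * (n-(j+1)) := by
        have := Nat.choose_mul_succ_eq (n-1) (j+1)
        rwa [Nat.sub_add_cancel (by omega)] at this
      have e1 : (n.choose (j+1) : ℝ) * ((j:ℝ)+1) = (n:ℝ) * ((n-1).choose j : ℝ) := by
        exact_mod_cast e1n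
      have e2 : ((n-1).choose (j+1) : ℝ) * (n:ℝ) = (n.choose (j+1) : ℝ) * ((n-(j+1) : ℕ) : ℝ) := by
        exact_mod_cast e2n
      have hexp1 : n - 1 - j = n - (j+1) := by omega
      have hexp2 : n - 1 - (j+1) = n - (j+1) - 1 := by omega
      rw [gfun, gfun, hexp1, hexp2]
      linear_combination -(θ^j * (1-θ)^(n-(j+1))) * e1 - (θ^(j+1) * (1-θ)^(n-(j+1)-1)) * e2

lemma hasDerivAt_binomCDF (n y : ℕ) (θ : ℝ) :
    HasDerivAt (fun t => binomCDF n t y) (-(gfun n θ y)) θ := by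
  induction y with
  | zero =>
      have h := hasDerivAt_one_sub_pow n θ
      have heq : (fun t : ℝ => binomCDF n t 0) = fun t : ℝ => (1 - t)^n := by
        ext t; simp [binomCDF, binomP]
      rw [heq]
      convert h using 1
      rcases Nat.eq_zero_or_pos n with h0 | h0
      · simp [gfun, h0]
      · simp [gfun, Nat.choose_zero_right]
    | succ y ih =>
      have h := ih.add (hasDerivAt_binomP_succ n y θ)
      have heq : (fun t : ℝ => binomCDF n t (y+1))
          = fun t : ℝ => binomCDF n t y + binomP n t (y+1) := by
        ext t; simp [binomCDF, Finset.sum_range_succ]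
      rw [heq]; exact h.congr_deriv (by ring)

lemma binomP_nonneg {n y : ℕ} {θ : ℝ} (h0 : 0 ≤ θ) (h1 : θ ≤ 1) : 0 ≤ binomP n θ y := by
  have : (0:ℝ) ≤ 1 - θ := by linarith
  unfold binomP; positivity

lemma binomP_pos {n y : ℕ} (hy : y ≤ n) {θ : ℝ} (h0 : 0 < θ) (h1 : θ < 1) :
    0 < binomP n θ y := by
  have h2 : (0:ℝ) < 1 - θ := by linarith
  have h3 : 0 < n.choose y := Nat.choose_pos hy
  have h3' : (0:ℝ) < (n.choose y : ℝ) := by exact_mod_cast h3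
  unfold binomP; positivity

lemma gfun_pos {n j : ℕ} (hn : 1 ≤ n) (hj : j ≤ n - 1) {θ : ℝ} (h0 : 0 < θ) (h1 : θ < 1) :
    0 < gfun n θ j := by
  have h2 : (0:ℝ) < 1 - θ := by linarith
  have h3 : (0:ℝ) < ((n-1).choose j : ℝ) := by exact_mod_cast Nat.choose_pos hj
  have h4 : (0:ℝ) < (n:ℝ) := by exact_mod_cast hn
  unfold gfun; positivity

lemma continuous_binomCDF (n y : ℕ) : Continuous (fun t : ℝ => binomCDF n t y) := by
  unfold binomCDF binomP
  exact continuous_finset_sum _ fun j _ => by fun_prop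

lemma binomCDF_n (n : ℕ) (θ : ℝ) : binomCDF n θ n = 1 := by
  have h := add_pow θ (1-θ) n
  simp only [add_sub_cancel, one_pow] at h
  rw [binomCDF, h]
  apply Finset.sum_congr rfl
  intro j hj
  rw [binomP]; ring

lemma binomCDFpred_succ (n : ℕ) (θ : ℝ) (y : ℕ) :
    binomCDFpred n θ (y+1) = binomCDF n θ y := rfl

lemma binomCDF_eq (n : ℕ) (θ : ℝ) (y : ℕ) :
    binomCDF n θ y = binomCDFpred n θ y + binomP n θ y :=
  Finset.sum_range_succ _ _

lemma binomCDFpred_nonneg {n y : ℕ} {θ : ℝ} (h0 : 0 ≤ θ) (h1 : θ ≤ 1) :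
    0 ≤ binomCDFpred n θ y :=
  Finset.sum_nonneg fun _ _ => binomP_nonneg h0 h1

lemma stevens_strictAntiOn (n : ℕ) (hn : 1 ≤ n) (y : ℕ) (hy : y ≤ n) (v : ℝ)
    (hv0 : 0 ≤ v) (hv1 : v ≤ 1) (hy0 : y = 0 → 0 < v) (hyn : y = n → v < 1) :
    StrictAntiOn (fun t : ℝ => (1 - v) * binomCDFpred n t y + v * binomCDF n t y)
      (Set.Icc 0 1) := by
  have hderiv : ∀ θ : ℝ, θ ∈ Set.Ioo (0:ℝ) 1 → ∃ D : ℝ,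
      HasDerivAt (fun t : ℝ => (1 - v) * binomCDFpred n t y + v * binomCDF n t y) (-D) θ ∧
      0 < D := by
    intro θ hθ
    obtain ⟨hθ0, hθ1⟩ := hθ
    rcases Nat.eq_zero_or_pos y with h0 | h0
    · subst h0
      refine ⟨v * gfun n θ 0, ?_, ?_⟩
      · have h := (hasDerivAt_binomCDF n 0 θ).const_mul v
        have heq : (fun t : ℝ => (1 - v) * binomCDFpred n t 0 + v * binomCDF n t 0)
            = fun t : ℝ => v * binomCDF n t 0 := by
          ext t; simp [binomCDFpred]
        rw [heq]; exact h.congr_deriv (by ring)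
      · have hv := hy0 rfl
        have hg : 0 < gfun n θ 0 := gfun_pos hn (by omega) hθ0 hθ1
        positivity
    · obtain ⟨m, rfl⟩ : ∃ m, y = m + 1 := ⟨y - 1, by omega⟩
      refine ⟨(1 - v) * gfun n θ m + v * gfun n θ (m+1), ?_, ?_⟩
      · have h1 := (hasDerivAt_binomCDF n m θ).const_mul (1 - v)
        have h2 := (hasDerivAt_binomCDF n (m+1) θ).const_mul v
        have h := h1.add h2
        have heq : (fun t : ℝ => (1 - v) * binomCDFpred n t (m+1) + v * binomCDF n t (m+1))
            = fun t : ℝ => (1 - v) * binomCDF n t m + v * binomCDF n t (m+1) := by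
          ext t; rw [binomCDFpred_succ]
        rw [heq]; exact h.congr_deriv (by ring)
      · have hg1 : 0 < gfun n θ m := gfun_pos hn (by omega) hθ0 hθ1
        rcases eq_or_lt_of_le hy with hyn' | hylt
        · have hvlt := hyn hyn'
          have hgy : gfun n θ (m+1) = 0 := gfun_eq_zero (le_of_eq hyn'.symm) θ
          rw [hgy]
          nlinarith
        · have hgy : 0 < gfun n θ (m+1) := gfun_pos hn (by omega) hθ0 hθ1
          rcases lt_or_ge v 1 with hv | hv
          · nlinarith [mul_pos (by linarith : (0:ℝ) < 1 - v) hg1, mul_nonneg hv0 hgy.le]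
          · have hveq : v = 1 := le_antisymm hv1 hv
            rw [hveq]; nlinarith
  apply strictAntiOn_of_deriv_neg (convex_Icc 0 1)
  · apply Continuous.continuousOn
    have hc1 : Continuous (fun t : ℝ => binomCDFpred n t y) := by
      unfold binomCDFpred binomP
      exact continuous_finset_sum _ fun j _ => by fun_prop
    have hc2 := continuous_binomCDF n y
    fun_prop
  · intro θ hθ
    rw [interior_Icc] at hθ
    obtain ⟨D, hd, hpos⟩ := hderiv θ hθ
    rw [hd.deriv]
    linarith

/-- Stevens' randomized upper endpoint `u(y,v)` — equal to `1` for `y = n, v ≥ α/2`, to `0`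
for `y = 0, v ≤ α/2`, and otherwise solving `(1-v) F_θ(y-1) + v F_θ(y) = α/2` — satisfies
`P_θ(θ > u(Y,V)) = α/2` exactly, for `Y ~ Binomial(n,θ)` and `V ~ U(0,1)` independent. -/
theorem stmt_6 (n : ℕ) (hn : 1 ≤ n) (α : ℝ) (hα : α ∈ Set.Ioo (0 : ℝ) 1)
    (θ : ℝ) (hθ : θ ∈ Set.Ioo (0 : ℝ) 1)
    (u : ℕ → ℝ → ℝ)
    (hu01 : ∀ y ≤ n, ∀ v ∈ Set.Icc (0 : ℝ) 1, u y v ∈ Set.Icc (0 : ℝ) 1)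
    (hun : ∀ v ∈ Set.Icc (0 : ℝ) 1, α / 2 ≤ v → u n v = 1)
    (hu0 : ∀ v ∈ Set.Icc (0 : ℝ) 1, v ≤ α / 2 → u 0 v = 0)
    (hu : ∀ y ≤ n, ∀ v ∈ Set.Icc (0 : ℝ) 1, ¬(y = n ∧ α / 2 ≤ v) → ¬(y = 0 ∧ v ≤ α / 2) →
      (1 - v) * binomCDFpred n (u y v) y + v * binomCDF n (u y v) y = α / 2) :
    ∑ y ∈ Finset.range (n + 1),
      binomP n θ y *
        (volume {v : ℝ | v ∈ Set.Icc (0 : ℝ) 1 ∧ u y v < θ}).toReal = α / 2 := by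
  obtain ⟨hα0, hα1⟩ := hα
  obtain ⟨hθ0, hθ1⟩ := hθ
  set T : ℕ → ℝ := fun y => max 0 (α/2 - binomCDFpred n θ y) with hT
  have hterm : ∀ y ∈ Finset.range (n+1),
      binomP n θ y * (volume {v : ℝ | v ∈ Set.Icc (0 : ℝ) 1 ∧ u y v < θ}).toReal
        = T y - T (y+1) := by
    intro y hyr
    have hy : y ≤ n := by simpa [Nat.lt_succ_iff] using Finset.mem_range.mp hyr
    set A := binomCDFpred n θ y with hA
    set f := binomP n θ y with hf
    have hfpos : 0 < f := binomP_pos hy hθ0 hθ1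
    have hAnn : 0 ≤ A := binomCDFpred_nonneg (le_of_lt hθ0) (le_of_lt hθ1)
    set c : ℝ := (α/2 - A)/f with hc
    -- set equality
    have hset : {v : ℝ | v ∈ Set.Icc (0 : ℝ) 1 ∧ u y v < θ}
        = Set.Icc (0:ℝ) 1 ∩ Set.Iio c := by
      ext v
      simp only [Set.mem_setOf_eq, Set.mem_inter_iff, Set.mem_Iio]
      constructor
      · rintro ⟨hvI, hlt⟩
        refine ⟨hvI, ?_⟩
        rw [hc, lt_div_iff₀ hfpos]
        -- need A + v*f < α/2, i.e. v*f < α/2 - A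
        have key : A + v * f < α/2 := by
          by_cases hcase1 : y = n ∧ α/2 ≤ v
          · exfalso
            rw [hcase1.1] at hlt
            rw [hun v hvI hcase1.2] at hlt
            linarith
          · by_cases hcase2 : y = 0 ∧ v ≤ α/2
            · obtain ⟨hy0, hv2⟩ := hcase2
              have hA0 : A = 0 := by rw [hA, hy0]; simp [binomCDFpred]
              have hf1 : f < 1 := by
                rw [hf, hy0, binomP]
                simp only [Nat.choose_zero_right, Nat.cast_one, pow_zero, one_mul,
                  Nat.sub_zero]
                exact pow_lt_one₀ (by linarith) (by linarith) (by omega)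
              obtain ⟨hv0, hv1⟩ := hvI
              rw [hA0]
              nlinarith
            · have heq := hu y hy v hvI hcase1 hcase2
              have hy0 : y = 0 → 0 < v := by
                intro h0; by_contra hcon
                exact hcase2 ⟨h0, by push_neg at hcon; linarith⟩
              have hyn : y = n → v < 1 := by
                intro h0
                have : ¬ (α/2 ≤ v) := fun hle => hcase1 ⟨h0, hle⟩
                push_neg at this; linarith
              have hanti := stevens_strictAntiOn n hn y hy v hvI.1 hvI.2 hy0 hyn
              have huI := hu01 y hy v hvI
              have hθI : θ ∈ Set.Icc (0:ℝ) 1 := ⟨le_of_lt hθ0, le_of_lt hθ1⟩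
              have hHθ : (1 - v) * binomCDFpred n θ y + v * binomCDF n θ y
                  = A + v * f := by
                rw [binomCDF_eq, hA, hf]; ring
              have h2 : (1 - v) * binomCDFpred n θ y + v * binomCDF n θ y
                  < (1 - v) * binomCDFpred n (u y v) y + v * binomCDF n (u y v) y :=
                hanti huI hθI hlt
              rw [heq, hHθ] at h2
              linarith
        linarith
      · rintro ⟨hvI, hlt⟩
        refine ⟨hvI, ?_⟩
        rw [hc, lt_div_iff₀ hfpos] at hlt
        have key : A + v * f < α/2 := by linarith
        by_cases hcase1 : y = n ∧ α/2 ≤ v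
        · exfalso
          obtain ⟨hyn', hv2⟩ := hcase1
          have hsum : A + f = 1 := by
            rw [hA, hf, ← binomCDF_eq, hyn', binomCDF_n]
          obtain ⟨hv0, hv1⟩ := hvI
          nlinarith
        · by_cases hcase2 : y = 0 ∧ v ≤ α/2
          · rw [hcase2.1, hu0 v hvI hcase2.2]; exact hθ0
          · have heq := hu y hy v hvI hcase1 hcase2
            have hy0 : y = 0 → 0 < v := by
              intro h0; by_contra hcon
              exact hcase2 ⟨h0, by push_neg at hcon; linarith⟩
            have hyn : y = n → v < 1 := by
              intro h0
              have : ¬ (α/2 ≤ v) := fun hle => hcase1 ⟨h0, hle⟩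
              push_neg at this; linarith
            have hanti := stevens_strictAntiOn n hn y hy v hvI.1 hvI.2 hy0 hyn
            have huI := hu01 y hy v hvI
            have hθI : θ ∈ Set.Icc (0:ℝ) 1 := ⟨le_of_lt hθ0, le_of_lt hθ1⟩
            have hHθ : (1 - v) * binomCDFpred n θ y + v * binomCDF n θ y
                = A + v * f := by
              rw [binomCDF_eq, hA, hf]; ring
            by_contra hcon
            push_neg at hcon
            have hle : θ ≤ u y v := hcon
            have h2 : (1 - v) * binomCDFpred n (u y v) y + v * binomCDF n (u y v) y
                ≤ (1 - v) * binomCDFpred n θ y + v * binomCDF n θ y :=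
              hanti.antitoneOn hθI huI hle
            rw [heq, hHθ] at h2
            linarith
    rw [hset]
    have hT1 : T (y+1) = max 0 (α/2 - (A + f)) := by
      rw [hT]
      simp only [binomCDFpred_succ, binomCDF_eq, hA, hf]
    have hTy : T y = max 0 (α/2 - A) := rfl
    rcases le_or_gt c 0 with hc0 | hc0
    · have hempty : Set.Icc (0:ℝ) 1 ∩ Set.Iio c = ∅ := by
        ext v
        simp only [Set.mem_inter_iff, Set.mem_Icc, Set.mem_Iio, Set.mem_empty_iff_false,
          iff_false, not_and]
        rintro ⟨hv0, _⟩
        linarith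
      rw [hempty]
      have hAge : α/2 - A ≤ 0 := by
        rw [hc, div_nonpos_iff] at hc0
        rcases hc0 with ⟨h1, h2⟩ | ⟨h1, h2⟩
        · linarith
        · exact h1
      rw [hTy, hT1]
      rw [max_eq_left hAge, max_eq_left (by linarith)]
      simp
    · rcases le_or_gt c 1 with hc1 | hc1
      · have hIco : Set.Icc (0:ℝ) 1 ∩ Set.Iio c = Set.Ico 0 c := by
          ext v
          simp only [Set.mem_inter_iff, Set.mem_Icc, Set.mem_Iio, Set.mem_Ico]
          constructor
          · rintro ⟨⟨h1, h2⟩, h3⟩; exact ⟨h1, h3⟩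
          · rintro ⟨h1, h2⟩; exact ⟨⟨h1, by linarith⟩, h2⟩
        rw [hIco, Real.volume_Ico, ENNReal.toReal_ofReal (by linarith)]
        have h1 : 0 < α/2 - A := by
          by_contra hcon; push_neg at hcon
          have : c ≤ 0 := div_nonpos_of_nonpos_of_nonneg (by linarith) (le_of_lt hfpos)
          linarith
        have h2 : α/2 - A ≤ f := by
          rw [hc, div_le_one hfpos] at hc1
          linarith
        rw [hTy, hT1]
        rw [max_eq_right (le_of_lt h1), max_eq_left (by linarith)]
        field_simp [hc]
        rw [hc, sub_zero, mul_comm f, div_mul_cancel₀ _ hfpos.ne']; ring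
      · have hIcc : Set.Icc (0:ℝ) 1 ∩ Set.Iio c = Set.Icc 0 1 := by
          apply Set.inter_eq_left.mpr
          intro v hv
          simp only [Set.mem_Iio]
          exact lt_of_le_of_lt hv.2 hc1
        rw [hIcc, Real.volume_Icc, ENNReal.toReal_ofReal (by norm_num)]
        have h2 : f < α/2 - A := by
          rw [hc, lt_div_iff₀ hfpos] at hc1
          linarith
        rw [hTy, hT1]
        rw [max_eq_right (by linarith), max_eq_right (by linarith)]
        ring
  rw [Finset.sum_congr rfl hterm, Finset.sum_range_sub' T (n+1)]
  have hT0 : T 0 = α/2 := by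
    rw [hT]
    simp only [binomCDFpred]
    simp only [Finset.range_zero, Finset.sum_empty, sub_zero]
    exact max_eq_right (by linarith)
  have hTn : T (n+1) = 0 := by
    rw [hT]
    simp only [binomCDFpred_succ, binomCDF_n]
    exact max_eq_left (by linarith)
  rw [hT0, hTn, sub_zero]
end

section
/- Let y be an integer with 1 ≤ y ≤ n, let v ∈ (0,1], and let c ∈ (0,1). If θ_R, θ_CP ∈ (0,1) satisfy (1−v)(1 − F_{θ_R}(y−1)) + v (1 − F_{θ_R}(y)) = c and 1 − F_{θ_CP}(y−1) = c, then θ_R > θ_CP. (The lower endpoint of the randomized confidence interval is strictly larger than the Clopper–Pearson lower endpoint.) -/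
lemma binomP_pos_s9 {n y : ℕ} (h : y ≤ n) {θ : ℝ} (hθ : θ ∈ Set.Ioo (0:ℝ) 1) :
    0 < binomP n θ y := by
  have h1 : (0:ℝ) < (n.choose y : ℝ) := by
    exact_mod_cast Nat.choose_pos h
  have h2 : (0:ℝ) < θ ^ y := pow_pos hθ.1 _
  have h3 : (0:ℝ) < (1 - θ) ^ (n - y) := pow_pos (by linarith [hθ.2]) _
  exact mul_pos (mul_pos h1 h2) h3

lemma hasDerivAt_binomP (n j : ℕ) (hj : 1 ≤ j) (hjn : j ≤ n) (θ : ℝ) :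
    HasDerivAt (fun t => binomP n t j)
      ((n : ℝ) * (binomP (n-1) θ (j-1) - binomP (n-1) θ j)) θ := by
  obtain ⟨k, rfl⟩ : ∃ k, j = k + 1 := ⟨j - 1, by omega⟩
  obtain ⟨m, rfl⟩ : ∃ m, n = k + 1 + m := ⟨n - (k+1), by omega⟩
  have e0 : k + 1 + m = k + m + 1 := by omega
  rw [e0]
  have e1 : (k + m + 1) - (k + 1) = m := by omega
  have e2 : (k + m + 1) - 1 = k + m := by omega
  have e3 : (k + m) - k = m := by omega
  have e4 : (k + m) - (k + 1) = m - 1 := by omega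
  have hpow : HasDerivAt (fun t : ℝ => t ^ (k+1)) ((k+1 : ℝ) * θ ^ k) θ := by
    simpa using hasDerivAt_pow (k+1) θ
  have hq : HasDerivAt (fun t : ℝ => (1 - t) ^ m)
      (((m:ℝ) * (1 - θ) ^ (m - 1)) * (-1)) θ :=
    HasDerivAt.fun_pow ((hasDerivAt_id θ).const_sub 1) m
  have h := (hpow.const_mul ((k+m+1).choose (k+1) : ℝ)).mul hq
  convert h using 1
  · rfl
  · rfl
  · ext t
    simp [binomP, e1]
  · simp only [binomP, e1, e2, e3, e4, Nat.add_sub_cancel, Nat.add_sub_cancel_left]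
    have id1 : ((k+m+1) * (k+m).choose k : ℝ) = ((k+m+1).choose (k+1) * (k+1) : ℝ) := by
      exact_mod_cast congrArg (Nat.cast : ℕ → ℝ) (Nat.add_one_mul_choose_eq (k+m) k)
    have id2n : (k+m+1) * (k+m).choose (k+1) = (k+m+1).choose (k+1) * m := by
      have e5 : k + m + 1 - (k + 1) = m := by omega
      calc (k+m+1) * (k+m).choose (k+1)
          = (k+m+1).choose (k+2) * (k+2) := by
            simpa using Nat.add_one_mul_choose_eq (k+m) (k+1)
        _ = (k+m+1).choose (k+1) * m := by
            have := Nat.choose_succ_right_eq (k+m+1) (k+1)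
            rw [e5] at this
            simpa using this
    have id2 : ((k+m+1) * (k+m).choose (k+1) : ℝ) = ((k+m+1).choose (k+1) * m : ℝ) := by
      exact_mod_cast congrArg (Nat.cast : ℕ → ℝ) id2n
    push_cast at id1 id2 ⊢
    linear_combination (θ ^ k * (1-θ) ^ m) * id1 - (θ ^ (k+1) * (1-θ) ^ (m-1)) * id2

lemma hasDerivAt_binomCDFpred (n y : ℕ) (hy1 : 1 ≤ y) (hyn : y ≤ n) (θ : ℝ) :
    HasDerivAt (fun t => binomCDFpred n t y)
      (-((n : ℝ) * binomP (n-1) θ (y-1))) θ := by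
  induction y with
  | zero => omega
  | succ y ih =>
    rcases Nat.eq_zero_or_pos y with rfl | hy
    · -- y = 0 : binomCDFpred n t 1 = binomP n t 0 = (1-t)^n
      have hfun : (fun t : ℝ => binomCDFpred n t 1) = fun t : ℝ => (1 - t) ^ n := by
        ext t
        simp [binomCDFpred, binomP]
      rw [hfun]
      have h : HasDerivAt (fun t : ℝ => (1 - t) ^ n)
          (((n:ℝ) * (1 - θ) ^ (n - 1)) * (-1)) θ :=
        HasDerivAt.fun_pow ((hasDerivAt_id θ).const_sub 1) n
      convert h using 1
      simp [binomP]
    · have ih' := ih hy (by omega)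
      have hterm := hasDerivAt_binomP n y hy (by omega) θ
      have h := ih'.add hterm
      have hfun : (fun t : ℝ => binomCDFpred n t (y+1))
          = fun t : ℝ => binomCDFpred n t y + binomP n t y := by
        ext t
        simp [binomCDFpred, Finset.sum_range_succ]
      rw [hfun]
      convert h using 1
      · rfl
      · rfl
      · rfl
      have : y + 1 - 1 = y := by omega
      rw [this]
      ring

lemma binomCDFpred_strictAnti (n y : ℕ) (hy1 : 1 ≤ y) (hyn : y ≤ n) :
    StrictAntiOn (fun θ => binomCDFpred n θ y) (Set.Icc (0:ℝ) 1) := by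
  apply strictAntiOn_of_deriv_neg (convex_Icc 0 1)
  · exact (continuous_finset_sum _ fun j _ => by
      unfold binomP; fun_prop).continuousOn
  · intro x hx
    rw [interior_Icc] at hx
    rw [(hasDerivAt_binomCDFpred n y hy1 hyn x).deriv]
    have hpos : 0 < binomP (n-1) x (y-1) := binomP_pos_s9 (by omega) hx
    have hn' : (0:ℝ) < n := by
      have : 1 ≤ n := le_trans hy1 hyn
      exact_mod_cast Nat.lt_of_lt_of_le Nat.zero_lt_one this
    nlinarith

/-- For `1 ≤ y ≤ n`, `v ∈ (0,1]`, `c ∈ (0,1)`: if `θ_R, θ_CP ∈ (0,1)` satisfy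
`(1-v)(1 - F_{θ_R}(y-1)) + v(1 - F_{θ_R}(y)) = c` and `1 - F_{θ_CP}(y-1) = c`, then
`θ_R > θ_CP` (the randomized lower endpoint is strictly larger than the Clopper–Pearson
one). -/
theorem stmt_9 (n : ℕ) (hn : 1 ≤ n) (y : ℕ) (hy1 : 1 ≤ y) (hyn : y ≤ n)
    (v : ℝ) (hv : v ∈ Set.Ioc (0 : ℝ) 1) (c : ℝ) (hc : c ∈ Set.Ioo (0 : ℝ) 1)
    (θR θCP : ℝ) (hθR : θR ∈ Set.Ioo (0 : ℝ) 1) (hθCP : θCP ∈ Set.Ioo (0 : ℝ) 1)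
    (hR : (1 - v) * (1 - binomCDFpred n θR y) + v * (1 - binomCDF n θR y) = c)
    (hCP : 1 - binomCDFpred n θCP y = c) :
    θR > θCP := by
  have hsplit : binomCDF n θR y = binomCDFpred n θR y + binomP n θR y := by
    simp [binomCDF, binomCDFpred, Finset.sum_range_succ]
  have hfpos : 0 < binomP n θR y := binomP_pos_s9 hyn hθR
  -- 1 - binomCDFpred n θR y = c + v * binomP n θR y > c
  have hkey : binomCDFpred n θR y < binomCDFpred n θCP y := by
    have : 1 - binomCDFpred n θR y = c + v * binomP n θR y := by
      rw [hsplit] at hR; linarith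
    nlinarith [hv.1, mul_pos hv.1 hfpos]
  by_contra hle
  push_neg at hle
  have hanti := binomCDFpred_strictAnti n y hy1 hyn
  rcases lt_or_eq_of_le hle with hlt | heq
  · have := hanti (Set.mem_Icc.2 ⟨le_of_lt hθR.1, le_of_lt hθR.2⟩)
      (Set.mem_Icc.2 ⟨le_of_lt hθCP.1, le_of_lt hθCP.2⟩) hlt
    simp only at this
    linarith
  · rw [heq] at hkey
    linarith
end
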